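/- For every h ∈ L²(0,1) one has ‖K K* h − Q_m* Q_m h‖_{L²(0,1)} ≤ (C_K²/(6m²))·‖h‖_{L²(0,1)}, where (K K* h)(x) = ∫₀¹ h(z)·(∫₀¹ κ(x,y) κ(z,y) dy) dz and (Q_m* Q_m h)(x) = (1/m)·Σ_{l=1}^m κ(x, ξ_{l,m})·∫₀¹ κ(z, ξ_{l,m}) h(z) dz. -/

import Mathlib

open Real MeasureTheory

/-- The unit interval `[0,1]`. -/
def I01 : Set ℝ := Set.Icc 0 1

/-- `κ : [0,1]² → ℝ` is twice continuously differentiable, with partial derivatives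
`κ10 = ∂ₓκ`, `κ01 = ∂ᵧκ`, `κ20 = ∂ₓ²κ`, `κ11 = ∂ₓ∂ᵧκ`, `κ02 = ∂ᵧ²κ`, and
`CK` bounds the absolute values of `κ` and all its partial derivatives of order `≤ 2`
on `[0,1]²` (in the paper, `CK` is the supremum of these quantities). -/
def IsC2KernelWith (κ κ10 κ01 κ20 κ11 κ02 : ℝ → ℝ → ℝ) (CK : ℝ) : Prop :=
  (∀ x ∈ I01, ∀ y ∈ I01, HasDerivWithinAt (fun x' => κ x' y) (κ10 x y) I01 x) ∧
  (∀ x ∈ I01, ∀ y ∈ I01, HasDerivWithinAt (fun y' => κ x y') (κ01 x y) I01 y) ∧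
  (∀ x ∈ I01, ∀ y ∈ I01, HasDerivWithinAt (fun x' => κ10 x' y) (κ20 x y) I01 x) ∧
  (∀ x ∈ I01, ∀ y ∈ I01, HasDerivWithinAt (fun y' => κ10 x y') (κ11 x y) I01 y) ∧
  (∀ x ∈ I01, ∀ y ∈ I01, HasDerivWithinAt (fun y' => κ01 x y') (κ02 x y) I01 y) ∧
  ContinuousOn (fun p : ℝ × ℝ => κ p.1 p.2) (I01 ×ˢ I01) ∧
  ContinuousOn (fun p : ℝ × ℝ => κ10 p.1 p.2) (I01 ×ˢ I01) ∧
  ContinuousOn (fun p : ℝ × ℝ => κ01 p.1 p.2) (I01 ×ˢ I01) ∧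
  ContinuousOn (fun p : ℝ × ℝ => κ20 p.1 p.2) (I01 ×ˢ I01) ∧
  ContinuousOn (fun p : ℝ × ℝ => κ11 p.1 p.2) (I01 ×ˢ I01) ∧
  ContinuousOn (fun p : ℝ × ℝ => κ02 p.1 p.2) (I01 ×ˢ I01) ∧
  (∀ x ∈ I01, ∀ y ∈ I01,
    |κ x y| ≤ CK ∧ |κ10 x y| ≤ CK ∧ |κ01 x y| ≤ CK ∧
    |κ20 x y| ≤ CK ∧ |κ11 x y| ≤ CK ∧ |κ02 x y| ≤ CK)

/-- The midpoint grid points `ξ_{l,m} = (2l−1)/(2m)`. -/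
noncomputable def gridPt (m l : ℕ) : ℝ := (2 * (l : ℝ) - 1) / (2 * (m : ℝ))

open Set intervalIntegral

lemma ftc_within {f f' : ℝ → ℝ} {a b : ℝ}
    (hd : ∀ t ∈ Icc a b, HasDerivWithinAt f (f' t) (Icc a b) t)
    (hc : ContinuousOn f' (Icc a b)) {u v : ℝ} (hu : u ∈ Icc a b) (hv : v ∈ Icc a b) :
    ∫ s in u..v, f' s = f v - f u := by
  have key : ∀ p q : ℝ, p ∈ Icc a b → q ∈ Icc a b → p ≤ q →
      ∫ s in p..q, f' s = f q - f p := by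
    intro p q hp hq hpq
    refine integral_eq_sub_of_hasDeriv_right_of_le hpq
      (fun t ht => (hd t ⟨hp.1.trans ht.1, ht.2.trans hq.2⟩).continuousWithinAt.mono
        (Icc_subset_Icc hp.1 hq.2)) (fun t ht => ?_)
      ((hc.mono (Icc_subset_Icc hp.1 hq.2)).intervalIntegrable_of_Icc hpq)
    have htab : t ∈ Set.Ioo a b := ⟨hp.1.trans_lt ht.1, ht.2.trans_le hq.2⟩
    exact (hd t ⟨htab.1.le, htab.2.le⟩).mono_of_mem_nhdsWithin
      (mem_nhdsWithin_of_mem_nhds (Icc_mem_nhds htab.1 htab.2))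
  rcases le_total u v with huv | huv
  · exact key u v hu hv huv
  · rw [intervalIntegral.integral_symm, key v u hv hu huv]; ring

lemma taylor_bound {f f' f'' : ℝ → ℝ} {a b M : ℝ}
    (hd1 : ∀ t ∈ Icc a b, HasDerivWithinAt f (f' t) (Icc a b) t)
    (hd2 : ∀ t ∈ Icc a b, HasDerivWithinAt f' (f'' t) (Icc a b) t)
    (hc2 : ContinuousOn f'' (Icc a b)) (hM : ∀ t ∈ Icc a b, |f'' t| ≤ M)
    {c t : ℝ} (hc : c ∈ Icc a b) (ht : t ∈ Icc a b) :
    |f t - f c - f' c * (t - c)| ≤ M * (t - c) ^ 2 / 2 := by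
  have hc1 : ContinuousOn f' (Icc a b) := fun x hx => (hd2 x hx).continuousWithinAt
  have key : ∀ s ∈ Icc a b, |f' s - f' c| ≤ M * |s - c| := by
    intro s hs
    rw [← ftc_within hd2 hc2 hc hs]
    have := intervalIntegral.norm_integral_le_of_norm_le_const
      (C := M) (f := f'') (a := c) (b := s) (fun x hx => by
        refine hM x ?_
        exact (Set.uIoc_subset_uIcc).trans (Set.uIcc_subset_Icc hc hs) hx)
    simpa [Real.norm_eq_abs] using this
  have ftc1 : ∫ s in c..t, f' s = f t - f c := ftc_within hd1 hc1 hc ht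
  have hsplit : f t - f c - f' c * (t - c) = ∫ s in c..t, (f' s - f' c) := by
    have hint : IntervalIntegrable f' volume c t :=
      (hc1.mono (Set.uIcc_subset_Icc hc ht)).intervalIntegrable
    rw [intervalIntegral.integral_sub hint intervalIntegrable_const, ftc1,
      intervalIntegral.integral_const, smul_eq_mul]
    ring
  rw [hsplit]
  have hcont_sub : ContinuousOn (fun s => |f' s - f' c|) (Icc a b) :=
    (hc1.sub continuousOn_const).abs
  rcases le_total c t with hct | htc
  · calc |∫ s in c..t, (f' s - f' c)| ≤ ∫ s in c..t, |f' s - f' c| :=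
          intervalIntegral.abs_integral_le_integral_abs hct
    _ ≤ ∫ s in c..t, M * (s - c) := by
        apply intervalIntegral.integral_mono_on hct
          ((hcont_sub.mono (Set.Icc_subset_Icc hc.1 ht.2)).intervalIntegrable_of_Icc hct)
          ((continuousOn_const.mul ((continuousOn_id.sub continuousOn_const))).intervalIntegrable_of_Icc hct)
        intro s hs
        have := key s ⟨hc.1.trans hs.1, hs.2.trans ht.2⟩
        have h2 : |s - c| = s - c := abs_of_nonneg (by linarith [hs.1])
        rw [h2] at this; simpa using this
    _ = M * (t - c) ^ 2 / 2 := by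
        rw [intervalIntegral.integral_const_mul,
          intervalIntegral.integral_sub intervalIntegrable_id intervalIntegrable_const,
          integral_id, intervalIntegral.integral_const, smul_eq_mul]
        ring
  · rw [intervalIntegral.integral_symm, abs_neg]
    calc |∫ s in t..c, (f' s - f' c)| ≤ ∫ s in t..c, |f' s - f' c| :=
          intervalIntegral.abs_integral_le_integral_abs htc
    _ ≤ ∫ s in t..c, M * (c - s) := by
        apply intervalIntegral.integral_mono_on htc
          ((hcont_sub.mono (Set.Icc_subset_Icc ht.1 hc.2)).intervalIntegrable_of_Icc htc)
          ((continuousOn_const.mul ((continuousOn_const.sub continuousOn_id))).intervalIntegrable_of_Icc htc)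
        intro s hs
        have := key s ⟨ht.1.trans hs.1, hs.2.trans hc.2⟩
        have h2 : |s - c| = c - s := by rw [abs_of_nonpos (by linarith [hs.2])]; ring
        rw [h2] at this; simpa using this
    _ = M * (t - c) ^ 2 / 2 := by
        rw [intervalIntegral.integral_const_mul,
          intervalIntegral.integral_sub intervalIntegrable_const intervalIntegrable_id,
          integral_id, intervalIntegral.integral_const, smul_eq_mul]
        ring

lemma midpoint_err {f f' f'' : ℝ → ℝ} {a b M : ℝ} (hab : a ≤ b)
    (hd1 : ∀ t ∈ Icc a b, HasDerivWithinAt f (f' t) (Icc a b) t)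
    (hd2 : ∀ t ∈ Icc a b, HasDerivWithinAt f' (f'' t) (Icc a b) t)
    (hc2 : ContinuousOn f'' (Icc a b)) (hM : ∀ t ∈ Icc a b, |f'' t| ≤ M) :
    |(∫ t in a..b, f t) - (b - a) * f ((a + b) / 2)| ≤ M * (b - a) ^ 3 / 24 := by
  set c : ℝ := (a + b) / 2 with hcdef
  have hc : c ∈ Icc a b := ⟨by simp only [hcdef]; linarith, by simp only [hcdef]; linarith⟩
  have hcontf : ContinuousOn f (Icc a b) := fun x hx => (hd1 x hx).continuousWithinAt
  have hintf : IntervalIntegrable f volume a b := hcontf.intervalIntegrable_of_Icc hab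
  have hT : ∀ t ∈ Icc a b, |f t - f c - f' c * (t - c)| ≤ M * (t - c) ^ 2 / 2 :=
    fun t ht => taylor_bound hd1 hd2 hc2 hM hc ht
  -- rewrite the difference as an integral
  have hsplit : (∫ t in a..b, f t) - (b - a) * f c
      = ∫ t in a..b, (f t - f c - f' c * (t - c)) := by
    have i1 : IntervalIntegrable (fun t => f' c * (t - c)) volume a b := by
      apply Continuous.intervalIntegrable; continuity
    have i2 : IntervalIntegrable (fun t : ℝ => t - c) volume a b := by
      apply Continuous.intervalIntegrable; continuity
    rw [intervalIntegral.integral_sub (hintf.sub intervalIntegrable_const) i1,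
      intervalIntegral.integral_sub hintf intervalIntegrable_const,
      intervalIntegral.integral_const_mul,
      show (∫ t in a..b, (t - c)) = _ from
        intervalIntegral.integral_sub intervalIntegrable_id intervalIntegrable_const,
      integral_id, intervalIntegral.integral_const, intervalIntegral.integral_const,
      smul_eq_mul, smul_eq_mul, hcdef]
    ring
  rw [hsplit]
  have hcontg : ContinuousOn (fun t => |f t - f c - f' c * (t - c)|) (Icc a b) :=
    ((hcontf.sub continuousOn_const).sub
      (continuousOn_const.mul (continuousOn_id.sub continuousOn_const))).abs
  calc |∫ t in a..b, (f t - f c - f' c * (t - c))|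
      ≤ ∫ t in a..b, |f t - f c - f' c * (t - c)| :=
        intervalIntegral.abs_integral_le_integral_abs hab
    _ ≤ ∫ t in a..b, M * (t - c) ^ 2 / 2 := by
        have i3 : IntervalIntegrable (fun t => M * (t - c) ^ 2 / 2) volume a b := by
          apply Continuous.intervalIntegrable; continuity
        apply intervalIntegral.integral_mono_on hab (hcontg.intervalIntegrable_of_Icc hab) i3
        exact fun t ht => hT t ht
    _ = M * (b - a) ^ 3 / 24 := by
        have : ∀ t : ℝ, M * (t - c) ^ 2 / 2 = (M / 2) * (t - c) ^ 2 := fun t => by ring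
        simp_rw [this]
        rw [intervalIntegral.integral_const_mul,
          intervalIntegral.integral_comp_sub_right (fun x => x ^ 2) c, integral_pow, hcdef]
        ring

lemma slice_cont {g : ℝ → ℝ → ℝ} (hg : ContinuousOn (fun p : ℝ × ℝ => g p.1 p.2) (I01 ×ˢ I01))
    {x : ℝ} (hx : x ∈ I01) : ContinuousOn (fun y => g x y) I01 :=
  hg.comp (Continuous.continuousOn (by continuity)) (fun y hy => Set.mk_mem_prod hx hy)

lemma slice_cont2 {g : ℝ → ℝ → ℝ}
    (hg : ContinuousOn (fun p : ℝ × ℝ => g p.1 p.2) (I01 ×ˢ I01))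
    {y : ℝ} (hy : y ∈ I01) : ContinuousOn (fun x => g x y) I01 :=
  hg.comp (Continuous.continuousOn (by continuity)) (fun x hx => Set.mk_mem_prod hx hy)

lemma kernel_midpoint {κ κ10 κ01 κ20 κ11 κ02 : ℝ → ℝ → ℝ} {CK : ℝ}
    (hker : IsC2KernelWith κ κ10 κ01 κ20 κ11 κ02 CK)
    {m : ℕ} (hm : 1 ≤ m) {x z : ℝ} (hx : x ∈ I01) (hz : z ∈ I01) :
    |(∫ y in (0:ℝ)..1, κ x y * κ z y)
      - (1 / (m : ℝ)) * ∑ l ∈ Finset.Icc 1 m, κ x (gridPt m l) * κ z (gridPt m l)|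
      ≤ CK ^ 2 / (6 * (m : ℝ) ^ 2) := by
  obtain ⟨hD10, hD01, hD20, hD11, hD02, hCκ, hC10, hC01, hC20, hC11, hC02, hB⟩ := hker
  have hCK0 : 0 ≤ CK := (abs_nonneg _).trans (hB 0 (by constructor <;> norm_num) 0
    (by constructor <;> norm_num)).1
  have hm0 : (0:ℝ) < m := by exact_mod_cast hm
  set φ : ℝ → ℝ := fun y => κ x y * κ z y with hφ
  set φ1 : ℝ → ℝ := fun y => κ01 x y * κ z y + κ x y * κ01 z y with hφ1
  set φ2 : ℝ → ℝ := fun y => (κ02 x y * κ z y + κ01 x y * κ01 z y)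
      + (κ01 x y * κ01 z y + κ x y * κ02 z y) with hφ2
  have hd1 : ∀ y ∈ I01, HasDerivWithinAt φ (φ1 y) I01 y :=
    fun y hy => ((hD01 x hx y hy).mul (hD01 z hz y hy))
  have hd2 : ∀ y ∈ I01, HasDerivWithinAt φ1 (φ2 y) I01 y :=
    fun y hy => ((hD02 x hx y hy).mul (hD01 z hz y hy)).add
      ((hD01 x hx y hy).mul (hD02 z hz y hy))
  have hc2 : ContinuousOn φ2 I01 :=
    (((slice_cont hC02 hx).mul (slice_cont hCκ hz)).add
      ((slice_cont hC01 hx).mul (slice_cont hC01 hz))).add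
      (((slice_cont hC01 hx).mul (slice_cont hC01 hz)).add
        ((slice_cont hCκ hx).mul (slice_cont hC02 hz)))
  have hMb : ∀ y ∈ I01, |φ2 y| ≤ 4 * CK ^ 2 := by
    intro y hy
    have b1 := hB x hx y hy; have b2 := hB z hz y hy
    have e : ∀ p q : ℝ, |p| ≤ CK → |q| ≤ CK → |p * q| ≤ CK ^ 2 := by
      intro p q hp hq
      rw [abs_mul, sq]
      exact mul_le_mul hp hq (abs_nonneg _) hCK0
    calc |φ2 y| ≤ ((|κ02 x y * κ z y| + |κ01 x y * κ01 z y|)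
        + (|κ01 x y * κ01 z y| + |κ x y * κ02 z y|)) := by
          refine (abs_add_le _ _).trans (add_le_add (abs_add_le _ _) (abs_add_le _ _))
      _ ≤ (CK ^ 2 + CK ^ 2) + (CK ^ 2 + CK ^ 2) :=
          add_le_add (add_le_add (e _ _ b1.2.2.2.2.2 b2.1) (e _ _ b1.2.2.1 b2.2.2.1))
            (add_le_add (e _ _ b1.2.2.1 b2.2.2.1) (e _ _ b1.1 b2.2.2.2.2.2))
      _ = 4 * CK ^ 2 := by ring
  -- grid
  set a : ℕ → ℝ := fun i => (i : ℝ) / m with ha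
  have hsub : ∀ i : ℕ, i < m → Icc (a i) (a (i + 1)) ⊆ I01 := by
    intro i hi
    apply Set.Icc_subset_Icc
    · positivity
    · rw [div_le_one hm0]; exact_mod_cast hi
  have hstep : ∀ i : ℕ, a i ≤ a (i + 1) := fun i =>
    (div_le_div_iff_of_pos_right hm0).mpr (by exact_mod_cast Nat.le_succ i)
  have hIcont : ContinuousOn φ I01 := (slice_cont hCκ hx).mul (slice_cont hCκ hz)
  have hint : ∀ i < m, IntervalIntegrable φ volume (a i) (a (i + 1)) := by
    intro i hi
    rw [intervalIntegrable_iff_integrableOn_Icc_of_le (hstep i)]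
    exact (hIcont.mono (hsub i hi)).integrableOn_compact isCompact_Icc
  have hsum : ∑ i ∈ Finset.range m, ∫ y in a i..a (i + 1), φ y = ∫ y in (0:ℝ)..1, φ y := by
    have := intervalIntegral.sum_integral_adjacent_intervals hint
    have h0 : a 0 = 0 := by simp [ha]
    have h1 : a m = 1 := by
      simp only [ha]; field_simp
    rwa [h0, h1] at this
  have hgrid : (1 / (m : ℝ)) * ∑ l ∈ Finset.Icc 1 m, κ x (gridPt m l) * κ z (gridPt m l)
      = ∑ i ∈ Finset.range m, (1 / (m : ℝ)) * (κ x (gridPt m (1 + i)) * κ z (gridPt m (1 + i))) := by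
    rw [← Finset.Ico_add_one_right_eq_Icc, Finset.sum_Ico_eq_sum_range, Finset.mul_sum]
    simp
  have hterm : ∀ i : ℕ, i < m →
      |(∫ y in a i..a (i + 1), φ y)
        - (1 / (m : ℝ)) * (κ x (gridPt m (1 + i)) * κ z (gridPt m (1 + i)))|
      ≤ (4 * CK ^ 2) * (1 / (m : ℝ)) ^ 3 / 24 := by
    intro i hi
    have hd1' : ∀ t ∈ Icc (a i) (a (i + 1)), HasDerivWithinAt φ (φ1 t) (Icc (a i) (a (i + 1))) t :=
      fun t ht => (hd1 t (hsub i hi ht)).mono (hsub i hi)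
    have hd2' : ∀ t ∈ Icc (a i) (a (i + 1)), HasDerivWithinAt φ1 (φ2 t) (Icc (a i) (a (i + 1))) t :=
      fun t ht => (hd2 t (hsub i hi ht)).mono (hsub i hi)
    have key := midpoint_err (hstep i) hd1' hd2' (hc2.mono (hsub i hi))
      (fun t ht => hMb t (hsub i hi ht))
    have hlen : a (i + 1) - a i = 1 / (m : ℝ) := by
      simp only [ha]; push_cast; field_simp; ring
    have hmid : (a i + a (i + 1)) / 2 = gridPt m (1 + i) := by
      simp only [ha, gridPt]; push_cast; field_simp; ring
    rw [hlen, hmid] at key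
    convert key using 3
  calc |(∫ y in (0:ℝ)..1, φ y)
        - (1 / (m : ℝ)) * ∑ l ∈ Finset.Icc 1 m, κ x (gridPt m l) * κ z (gridPt m l)|
      = |∑ i ∈ Finset.range m, ((∫ y in a i..a (i + 1), φ y)
          - (1 / (m : ℝ)) * (κ x (gridPt m (1 + i)) * κ z (gridPt m (1 + i))))| := by
        rw [Finset.sum_sub_distrib, hsum, ← hgrid]
    _ ≤ ∑ i ∈ Finset.range m, |(∫ y in a i..a (i + 1), φ y)
          - (1 / (m : ℝ)) * (κ x (gridPt m (1 + i)) * κ z (gridPt m (1 + i)))| :=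
        Finset.abs_sum_le_sum_abs _ _
    _ ≤ ∑ _i ∈ Finset.range m, (4 * CK ^ 2) * (1 / (m : ℝ)) ^ 3 / 24 :=
        Finset.sum_le_sum (fun i hi => hterm i (Finset.mem_range.mp hi))
    _ = CK ^ 2 / (6 * (m : ℝ) ^ 2) := by
        rw [Finset.sum_const, Finset.card_range, nsmul_eq_mul]
        field_simp
        ring

/-- For every `h ∈ L²(0,1)`:
`‖KK*h − Q_m*Q_m h‖ ≤ (C_K²/(6m²))·‖h‖`, where
`(KK*h)(x) = ∫₀¹ h(z)(∫₀¹ κ(x,y)κ(z,y) dy) dz` and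
`(Q_m*Q_m h)(x) = (1/m) Σ_{l=1}^m κ(x,ξ_{l,m}) ∫₀¹ κ(z,ξ_{l,m}) h(z) dz`. -/
theorem stmt_7 (κ κ10 κ01 κ20 κ11 κ02 : ℝ → ℝ → ℝ) (CK : ℝ)
    (hker : IsC2KernelWith κ κ10 κ01 κ20 κ11 κ02 CK)
    (m : ℕ) (hm : 1 ≤ m)
    (h : ℝ → ℝ) (hh : MemLp h 2 (volume.restrict (Set.Ioc 0 1))) :
    Real.sqrt (∫ x in (0:ℝ)..1,
        ((∫ z in (0:ℝ)..1, h z * ∫ y in (0:ℝ)..1, κ x y * κ z y)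
          - (1 / (m : ℝ)) * ∑ l ∈ Finset.Icc 1 m,
              κ x (gridPt m l) * ∫ z in (0:ℝ)..1, κ z (gridPt m l) * h z) ^ 2)
      ≤ CK ^ 2 / (6 * (m : ℝ) ^ 2) * Real.sqrt (∫ x in (0:ℝ)..1, h x ^ 2) := by
  obtain ⟨hD10, hD01, hD20, hD11, hD02, hCκ, hC10, hC01, hC20, hC11, hC02, hB⟩ := id hker
  set μ : Measure ℝ := volume.restrict (Set.Ioc 0 1) with hμ
  have hμuniv : μ Set.univ = 1 := by
    rw [hμ, Measure.restrict_apply_univ, Real.volume_Ioc]; norm_num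
  haveI : IsFiniteMeasure μ := ⟨by rw [hμuniv]; exact ENNReal.one_lt_top⟩
  have hInt : Integrable h μ := hh.integrable one_le_two
  have h01 : (0:ℝ) ∈ I01 := by constructor <;> norm_num
  have hCK0 : 0 ≤ CK := (abs_nonneg _).trans (hB 0 h01 0 h01).1
  have hm0 : (0:ℝ) < m := by exact_mod_cast hm
  set E : ℝ := CK ^ 2 / (6 * (m : ℝ) ^ 2) with hE
  have hE0 : 0 ≤ E := by rw [hE]; positivity
  set N : ℝ := Real.sqrt (∫ x in (0:ℝ)..1, h x ^ 2) with hNdef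
  have hN0 : 0 ≤ N := Real.sqrt_nonneg _
  have hIoc : Set.Ioc (0:ℝ) 1 ⊆ I01 := Set.Ioc_subset_Icc_self
  have hξ : ∀ l ∈ Finset.Icc 1 m, gridPt m l ∈ I01 := by
    intro l hl
    rw [Finset.mem_Icc] at hl
    have h1 : (1:ℝ) ≤ l := by exact_mod_cast hl.1
    have h2 : (l:ℝ) ≤ m := by exact_mod_cast hl.2
    have he : gridPt m l = (2 * (l:ℝ) - 1) / (2 * (m:ℝ)) := rfl
    constructor
    · rw [he]; apply div_nonneg (by linarith) (by linarith)
    · rw [he, div_le_one (by linarith)]; linarith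
  -- Cauchy–Schwarz : ∫ |h| ≤ N
  have hCS : ∫ z, |h z| ∂μ ≤ N := by
    have hconj : Real.HolderConjugate 2 2 := Real.holderConjugate_iff.mpr ⟨one_lt_two, by norm_num⟩
    have h2 : ENNReal.ofReal (2:ℝ) = 2 := by norm_num
    have hmem : MemLp (fun z => |h z|) (ENNReal.ofReal (2:ℝ)) μ := by
      rw [h2]; exact hh.norm
    have hmem1 : MemLp (fun _ : ℝ => (1:ℝ)) (ENNReal.ofReal (2:ℝ)) μ := by
      rw [h2]; exact memLp_const 1
    have key := integral_mul_le_Lp_mul_Lq_of_nonneg hconj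
      (ae_of_all _ fun z => abs_nonneg (h z)) (ae_of_all _ fun _ => zero_le_one) hmem hmem1
    simp only [mul_one, Real.one_rpow] at key
    have e1 : ∫ z, |h z| ^ (2:ℝ) ∂μ = ∫ z, h z ^ 2 ∂μ := by
      apply MeasureTheory.integral_congr_ae; apply ae_of_all; intro z
      show |h z| ^ (2:ℝ) = h z ^ 2
      rw [show (2:ℝ) = ((2:ℕ):ℝ) by norm_num, Real.rpow_natCast, sq_abs]
    have e2 : ∫ _z, (1:ℝ) ∂μ = 1 := by
      rw [MeasureTheory.integral_const, measureReal_def, hμuniv]; simp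
    rw [e1, e2, Real.one_rpow, mul_one] at key
    calc ∫ z, |h z| ∂μ ≤ (∫ z, h z ^ 2 ∂μ) ^ ((1:ℝ)/2) := key
      _ = N := by
          rw [hNdef, intervalIntegral.integral_of_le zero_le_one, Real.sqrt_eq_rpow]
  -- pointwise bound
  have hpt : ∀ x ∈ I01,
      |(∫ z in (0:ℝ)..1, h z * ∫ y in (0:ℝ)..1, κ x y * κ z y)
        - (1 / (m : ℝ)) * ∑ l ∈ Finset.Icc 1 m,
            κ x (gridPt m l) * ∫ z in (0:ℝ)..1, κ z (gridPt m l) * h z| ≤ E * N := by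
    intro x hx
    set G : ℝ → ℝ := fun z => ∫ y in (0:ℝ)..1, κ x y * κ z y with hG
    have hGm : AEStronglyMeasurable G μ := by
      have c1 : ContinuousOn (fun p : ℝ × ℝ => κ x p.2) (I01 ×ˢ I01) :=
        (slice_cont hCκ hx).comp continuous_snd.continuousOn (fun p hp => hp.2)
      have cF : ContinuousOn (fun p : ℝ × ℝ => κ x p.2 * κ p.1 p.2)
          (Set.Ioc (0:ℝ) 1 ×ˢ Set.Ioc (0:ℝ) 1) :=
        (c1.mul hCκ).mono (Set.prod_mono hIoc hIoc)
      have hFm : AEStronglyMeasurable (fun p : ℝ × ℝ => κ x p.2 * κ p.1 p.2) (μ.prod μ) := by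
        rw [hμ, Measure.prod_restrict]
        exact cF.aestronglyMeasurable (measurableSet_Ioc.prod measurableSet_Ioc)
      have := hFm.integral_prod_right'
      exact this.congr (ae_of_all _ fun z =>
        (intervalIntegral.integral_of_le zero_le_one).symm)
    have hGbd : ∀ z ∈ Set.Ioc (0:ℝ) 1, ‖G z‖ ≤ CK ^ 2 := by
      intro z hz
      have := intervalIntegral.norm_integral_le_of_norm_le_const
        (C := CK ^ 2) (f := fun y => κ x y * κ z y) (a := 0) (b := 1) (fun y hy => by
          rw [Set.uIoc_of_le zero_le_one] at hy
          have b1 := (hB x hx y (hIoc hy)).1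
          have b2 := (hB z (hIoc hz) y (hIoc hy)).1
          rw [Real.norm_eq_abs, abs_mul, sq]
          exact mul_le_mul b1 b2 (abs_nonneg _) hCK0)
      simpa using this
    have hIntG : Integrable (fun z => h z * G z) μ :=
      (hInt.bdd_mul hGm ((ae_restrict_iff' measurableSet_Ioc).2
        (ae_of_all _ hGbd))).congr (ae_of_all _ fun z => mul_comm _ _)
    have hIntl : ∀ l ∈ Finset.Icc 1 m,
        Integrable (fun z => κ x (gridPt m l) * (κ z (gridPt m l) * h z)) μ := by
      intro l hl
      have hc : ContinuousOn (fun z => κ z (gridPt m l)) (Set.Ioc (0:ℝ) 1) :=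
        (slice_cont2 hCκ (hξ l hl)).mono hIoc
      have hbz : ∀ᵐ z ∂μ, ‖κ z (gridPt m l)‖ ≤ CK :=
        (ae_restrict_iff' measurableSet_Ioc).2 (ae_of_all _ fun z hz => by
          simpa [Real.norm_eq_abs] using (hB z (hIoc hz) _ (hξ l hl)).1)
      have := hInt.bdd_mul (hc.aestronglyMeasurable measurableSet_Ioc) hbz
      exact this.const_mul _
    set S : ℝ → ℝ := fun z =>
      (1 / (m : ℝ)) * ∑ l ∈ Finset.Icc 1 m, κ x (gridPt m l) * (κ z (gridPt m l) * h z)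
      with hS
    have hIntS : Integrable S μ := (integrable_finset_sum _ hIntl).const_mul _
    have hsumeq : (1 / (m : ℝ)) * ∑ l ∈ Finset.Icc 1 m,
        κ x (gridPt m l) * ∫ z in (0:ℝ)..1, κ z (gridPt m l) * h z = ∫ z, S z ∂μ := by
      rw [hS]
      rw [MeasureTheory.integral_const_mul, integral_finset_sum _ hIntl]
      congr 1
      apply Finset.sum_congr rfl
      intro l _
      rw [MeasureTheory.integral_const_mul, intervalIntegral.integral_of_le zero_le_one]
    have hGeq : (∫ z in (0:ℝ)..1, h z * G z) = ∫ z, h z * G z ∂μ :=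
      intervalIntegral.integral_of_le zero_le_one
    have hptz : ∀ z ∈ Set.Ioc (0:ℝ) 1, |h z * G z - S z| ≤ |h z| * E := by
      intro z hz
      have hgm := kernel_midpoint hker hm hx (hIoc hz)
      have hSz : S z = h z * ((1 / (m : ℝ)) * ∑ l ∈ Finset.Icc 1 m,
          κ x (gridPt m l) * κ z (gridPt m l)) := by
        rw [hS]
        simp only [Finset.mul_sum]
        apply Finset.sum_congr rfl
        intro l _; ring
      rw [hSz, ← mul_sub, abs_mul]
      exact mul_le_mul_of_nonneg_left hgm (abs_nonneg _)
    calc |(∫ z in (0:ℝ)..1, h z * G z)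
          - (1 / (m : ℝ)) * ∑ l ∈ Finset.Icc 1 m,
              κ x (gridPt m l) * ∫ z in (0:ℝ)..1, κ z (gridPt m l) * h z|
        = |∫ z, (h z * G z - S z) ∂μ| := by
          rw [hGeq, hsumeq, ← MeasureTheory.integral_sub hIntG hIntS]
      _ ≤ ∫ z, |h z * G z - S z| ∂μ := by
          simpa [Real.norm_eq_abs] using
            MeasureTheory.norm_integral_le_integral_norm (μ := μ) (fun z => h z * G z - S z)
      _ ≤ ∫ z, |h z| * E ∂μ := by
          apply integral_mono_of_nonneg (ae_of_all _ fun z => abs_nonneg _)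
            (hInt.abs.mul_const E)
          exact (ae_restrict_iff' measurableSet_Ioc).2 (ae_of_all _ hptz)
      _ = E * ∫ z, |h z| ∂μ := by
          rw [← MeasureTheory.integral_const_mul]
          apply MeasureTheory.integral_congr_ae; apply ae_of_all; intro z; ring
      _ ≤ E * N := mul_le_mul_of_nonneg_left hCS hE0
  -- assemble
  have key : (∫ x, ((∫ z in (0:ℝ)..1, h z * ∫ y in (0:ℝ)..1, κ x y * κ z y)
      - (1 / (m : ℝ)) * ∑ l ∈ Finset.Icc 1 m,
          κ x (gridPt m l) * ∫ z in (0:ℝ)..1, κ z (gridPt m l) * h z) ^ 2 ∂μ)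
      ≤ (E * N) ^ 2 := by
    have hb : ∀ᵐ x ∂μ, ((∫ z in (0:ℝ)..1, h z * ∫ y in (0:ℝ)..1, κ x y * κ z y)
        - (1 / (m : ℝ)) * ∑ l ∈ Finset.Icc 1 m,
            κ x (gridPt m l) * ∫ z in (0:ℝ)..1, κ z (gridPt m l) * h z) ^ 2 ≤ (E * N) ^ 2 := by
      apply (ae_restrict_iff' measurableSet_Ioc).2
      apply ae_of_all
      intro x hx
      have := hpt x (hIoc hx)
      calc (_ : ℝ) ^ 2 = |_| ^ 2 := (sq_abs _).symm
        _ ≤ (E * N) ^ 2 := by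
            apply pow_le_pow_left₀ (abs_nonneg _) this
    have := integral_mono_of_nonneg (ae_of_all _ fun x => sq_nonneg _)
      (integrable_const ((E * N) ^ 2)) hb
    rwa [MeasureTheory.integral_const, measureReal_def, hμuniv, ENNReal.toReal_one, one_smul] at this
  rw [intervalIntegral.integral_of_le zero_le_one]
  calc Real.sqrt _ ≤ Real.sqrt ((E * N) ^ 2) := Real.sqrt_le_sqrt key
    _ = E * N := Real.sqrt_sq (mul_nonneg hE0 hN0)
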